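/- Let n ≥ 2, let α, α̃ : ℝ^{n-1} → ℝ and β, β̃ : ℝ → ℝ be integrable functions with compact support, and suppose that ∫_ℝ β(y) dy = ∫_ℝ β̃(y) dy ≠ 0. Assume that for every ξ' ∈ ℝ^{n-1} and every ξₙ ∈ ℝ one has (∫_{ℝ^{n-1}} α(x') e^{i ξ'·x'} dx') · (∫_ℝ β(y) e^{ξₙ y} dy) = (∫_{ℝ^{n-1}} α̃(x') e^{i ξ'·x'} dx') · (∫_ℝ β̃(y) e^{ξₙ y} dy). Then α = α̃ almost everywhere on ℝ^{n-1}, and α(x')β(xₙ) = α̃(x')β̃(xₙ) for almost every (x', xₙ) ∈ ℝ^{n-1} × ℝ. -/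

import Mathlib

open MeasureTheory FourierTransform Real Complex SchwartzMap
open scoped RealInnerProductSpace ContDiff

/-- A smooth compactly supported function is a Schwartz function. -/
noncomputable def mySchwartzOfCompactSupport {V : Type*} [NormedAddCommGroup V] [NormedSpace ℝ V]
    (φ : V → ℂ) (h1 : ContDiff ℝ ∞ φ) (h2 : HasCompactSupport φ) : SchwartzMap V ℂ where
  toFun := φ
  smooth' := h1
  decay' := by
    intro k n
    have hcont : Continuous (iteratedFDeriv ℝ n φ) :=
      h1.continuous_iteratedFDeriv (by exact_mod_cast le_top)
    have hc : Continuous fun x => ‖x‖ ^ k * ‖iteratedFDeriv ℝ n φ x‖ :=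
      (continuous_norm.pow k).mul hcont.norm
    have hs : HasCompactSupport fun x => ‖x‖ ^ k * ‖iteratedFDeriv ℝ n φ x‖ := by
      apply HasCompactSupport.mul_left
      exact (h2.iteratedFDeriv n).norm
    obtain ⟨C, hC⟩ := hc.bounded_above_of_compact_support hs
    exact ⟨C, fun x => (le_abs_self _).trans ((Real.norm_eq_abs _) ▸ hC x)⟩

theorem ae_zero_of_fourier_zero {V : Type*} [NormedAddCommGroup V] [InnerProductSpace ℝ V]
    [FiniteDimensional ℝ V] [MeasurableSpace V] [BorelSpace V]
    (g : V → ℂ) (hg : Integrable g) (h0 : ∀ w : V, 𝓕 g w = 0) : g =ᵐ[volume] 0 := by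
  apply ae_eq_zero_of_integral_contDiff_smul_eq_zero hg.locallyIntegrable
  intro φ hφ hφsupp
  set ψ : SchwartzMap V ℂ := mySchwartzOfCompactSupport (fun x => (φ x : ℂ))
    (Complex.ofRealCLM.contDiff.comp hφ) (hφsupp.comp_left Complex.ofReal_zero) with hψ
  set χ : SchwartzMap V ℂ := (fourierTransformCLE ℝ (SchwartzMap V ℂ)).symm ψ with hχ
  have hFχ : 𝓕 ⇑χ = ⇑ψ := by
    have : ⇑(fourierTransformCLE ℝ (SchwartzMap V ℂ) χ) = ⇑ψ := by
      rw [hχ, (fourierTransformCLE ℝ (SchwartzMap V ℂ)).apply_symm_apply]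
    exact this
  have key : ∫ ξ : V, (𝓕 ⇑χ) ξ • g ξ = ∫ x : V, χ x • (𝓕 g) x := by
    have := VectorFourier.integral_fourierIntegral_smul_eq_flip (L := innerₗ V) (μ := volume) (ν := volume)
      Real.continuous_fourierChar continuous_inner χ.integrable hg
    rw [flip_innerₗ] at this
    exact this
  have hpt : ∀ x, φ x • g x = (⇑ψ x) • g x := fun x => by
    show φ x • g x = (φ x : ℂ) • g x
    rw [Complex.real_smul, smul_eq_mul]
  calc ∫ x, φ x • g x = ∫ x : V, (⇑ψ x) • g x := by simp_rw [hpt]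
      _ = ∫ ξ : V, (𝓕 ⇑χ) ξ • g ξ := by rw [hFχ]
      _ = ∫ x : V, χ x • (𝓕 g) x := key
      _ = 0 := by simp [h0]

theorem pi_ae_zero (m : ℕ) (g : (Fin m → ℝ) → ℝ) (hg : Integrable g)
    (h0 : ∀ ξ : Fin m → ℝ, ∫ x : Fin m → ℝ,
       (g x : ℂ) * Complex.exp (Complex.I * ∑ j, (ξ j : ℂ) * (x j : ℂ)) = 0) :
    g =ᵐ[volume] 0 := by
  set E := (MeasurableEquiv.toLp 2 (Fin m → ℝ)).symm with hE
  have hvol := EuclideanSpace.volume_preserving_symm_measurableEquiv_toLp (Fin m)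
  set G : EuclideanSpace ℝ (Fin m) → ℂ := fun x => (g (E x) : ℂ) with hG
  have hGint : Integrable G volume := by
    rw [show G = (fun y => (g y : ℂ)) ∘ ⇑E from rfl]
    exact (hvol.integrable_comp_emb E.measurableEmbedding).mpr hg.ofReal
  have hf0 : ∀ w, 𝓕 G w = 0 := by
    intro w
    rw [Real.fourier_eq']
    have hpt : ∀ x : EuclideanSpace ℝ (Fin m),
        Complex.exp (↑(-2 * π * ⟪x, w⟫) * Complex.I) • G x
        = ((fun y : Fin m → ℝ => (g y : ℂ) *
            Complex.exp (Complex.I * ∑ j, (((fun i => -2 * π * w i) j : ℝ) : ℂ) * (y j : ℂ)))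
           ∘ ⇑E) x := by
      intro x
      show Complex.exp (↑(-2 * π * ⟪x, w⟫) * Complex.I) • G x
        = (g (E x) : ℂ) * Complex.exp (Complex.I * ∑ j, ((-2 * π * w j : ℝ) : ℂ) * ((E x) j : ℂ))
      rw [smul_eq_mul, mul_comm]
      congr 2
      have hin : ⟪x, w⟫ = ∑ j, x j * w j := by
        simp [PiLp.inner_apply, RCLike.inner_apply, conj_trivial]
        exact Finset.sum_congr rfl fun j _ => mul_comm _ _
      rw [hin]
      push_cast
      rw [mul_comm _ Complex.I]
      simp only [Finset.mul_sum]
      refine Finset.sum_congr rfl fun j _ => ?_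
      rw [show (E x) j = x j from rfl]
      ring
    rw [funext hpt]
    exact (hvol.integral_comp E.measurableEmbedding _).trans (h0 _)
  have hae : G =ᵐ[volume] 0 := ae_zero_of_fourier_zero G hGint hf0
  have h2 : (fun y : Fin m → ℝ => (g y : ℂ)) =ᵐ[volume] 0 := by
    have hq := (MeasurePreserving.symm E hvol).quasiMeasurePreserving
    have h3 := hae.comp_tendsto hq.tendsto_ae
    filter_upwards [h3] with y hy
    simpa [hG, MeasurableEquiv.apply_symm_apply] using hy
  filter_upwards [h2] with y hy
  have hy' : (g y : ℂ) = 0 := by simpa using hy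
  exact_mod_cast hy'

lemma myIntegrableMul {d : ℝ → ℝ} (hd : Integrable d) {R : ℝ}
    (hsupp : ∀ y ∉ Set.Icc (-R) R, d y = 0) {m : ℝ → ℝ} (hm : Continuous m) :
    Integrable (fun y => d y * m y) := by
  obtain ⟨C, hC⟩ := (isCompact_Icc (a := -R) (b := R)).exists_bound_of_continuousOn
    hm.continuousOn
  refine Integrable.mono' (hd.norm.mul_const C)
    (hd.aestronglyMeasurable.mul hm.aestronglyMeasurable)
    (Filter.Eventually.of_forall fun y => ?_)
  by_cases hy : y ∈ Set.Icc (-R) R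
  · rw [norm_mul]
    exact mul_le_mul_of_nonneg_left (hC y hy) (norm_nonneg _)
  · simp only [hsupp y hy, zero_mul, norm_zero]
    positivity

lemma myMoments {d : ℝ → ℝ} (hd : Integrable d) {R : ℝ} (hR : 0 ≤ R)
    (hsupp : ∀ y ∉ Set.Icc (-R) R, d y = 0)
    (h0 : ∀ t : ℝ, ∫ y, d y * Real.exp (t * y) = 0) :
    ∀ (k : ℕ) (t : ℝ), ∫ y, d y * y ^ k * Real.exp (t * y) = 0 := by
  intro k
  induction k with
  | zero => intro t; simpa using h0 t
  | succ k ih =>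
    intro t₀
    have habs : ∀ y ∈ Set.Icc (-R) R, |y| ≤ R := fun y hy => abs_le.mpr ⟨hy.1, hy.2⟩
    have hmeas : ∀ (j : ℕ) (t : ℝ),
        AEStronglyMeasurable (fun y => d y * y ^ j * Real.exp (t * y)) volume := by
      intro j t
      exact (hd.aestronglyMeasurable.mul
        (continuous_pow j).aestronglyMeasurable).mul
        (Real.continuous_exp.comp (continuous_const.mul continuous_id)).aestronglyMeasurable
    have hint : ∀ (j : ℕ) (t : ℝ), Integrable (fun y => d y * y ^ j * Real.exp (t * y)) := by
      intro j t
      have := myIntegrableMul hd hsupp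
        (m := fun y => y ^ j * Real.exp (t * y))
        ((continuous_pow j).mul (Real.continuous_exp.comp (continuous_const.mul continuous_id)))
      simpa [mul_assoc] using this
    have key := hasDerivAt_integral_of_dominated_loc_of_deriv_le (s := Metric.ball t₀ 1) (Metric.ball_mem_nhds t₀ one_pos)
      (Filter.Eventually.of_forall fun t => hmeas k t)
      (hint k t₀)
      (F' := fun t y => d y * y ^ (k + 1) * Real.exp (t * y))
      (hmeas (k + 1) t₀)
      (bound := fun y => ‖d y‖ * (R ^ (k + 1) * Real.exp ((|t₀| + 1) * R)))
      (Filter.Eventually.of_forall fun y => ?_)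
      (hd.norm.mul_const _)
      (Filter.Eventually.of_forall fun y => ?_)
    · obtain ⟨-, hder⟩ := key
      have hzero : (fun t => ∫ y, d y * y ^ k * Real.exp (t * y)) = fun _ => 0 := funext ih
      rw [hzero] at hder
      exact hder.unique (hasDerivAt_const _ _)
    · -- bound
      intro t ht
      by_cases hy : y ∈ Set.Icc (-R) R
      · have h1 : |y| ≤ R := habs y hy
        have h2 : |t| ≤ |t₀| + 1 := by
          have hnb : |t - t₀| < 1 := by
            simpa [Real.norm_eq_abs] using mem_ball_iff_norm.mp ht
          have := abs_sub_abs_le_abs_sub t t₀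
          linarith
        have h3 : Real.exp (t * y) ≤ Real.exp ((|t₀| + 1) * R) := by
          apply Real.exp_le_exp.mpr
          calc t * y ≤ |t * y| := le_abs_self _
            _ = |t| * |y| := abs_mul _ _
            _ ≤ (|t₀| + 1) * R := by
                apply mul_le_mul h2 h1 (abs_nonneg _) (by positivity)
        have h4 : |y| ^ (k + 1) ≤ R ^ (k + 1) := pow_le_pow_left₀ (abs_nonneg _) h1 _
        calc ‖d y * y ^ (k + 1) * Real.exp (t * y)‖
            = ‖d y‖ * (|y| ^ (k + 1) * Real.exp (t * y)) := by
              rw [norm_mul, norm_mul, mul_assoc]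
              congr 2
              · exact _root_.abs_pow y (k+1) ▸ rfl
              · rw [Real.norm_eq_abs, abs_of_pos (Real.exp_pos _)]
          _ ≤ ‖d y‖ * (R ^ (k + 1) * Real.exp ((|t₀| + 1) * R)) := by
              apply mul_le_mul_of_nonneg_left _ (norm_nonneg _)
              exact mul_le_mul h4 h3 (Real.exp_pos _).le (by positivity)
      · simp only [hsupp y hy, zero_mul, norm_zero, norm_zero, zero_mul]
        positivity
    · -- derivative
      intro t ht
      have h1 : HasDerivAt (fun t : ℝ => t * y) y t := hasDerivAt_mul_const y
      have h2 := (h1.exp).const_mul (d y * y ^ k)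
      rw [show d y * y ^ (k + 1) * Real.exp (t * y) = d y * y ^ k * (Real.exp (t * y) * y) by ring]
      exact h2

lemma myLaplaceZero {d : ℝ → ℝ} (hd : Integrable d) (hds : HasCompactSupport d)
    (h0 : ∀ t : ℝ, ∫ y, d y * Real.exp (t * y) = 0) : d =ᵐ[volume] 0 := by
  obtain ⟨r, hr⟩ := hds.isBounded.subset_closedBall 0
  set R : ℝ := max r 0 with hRdef
  have hR : 0 ≤ R := le_max_right _ _
  have hsupp : ∀ y ∉ Set.Icc (-R) R, d y = 0 := by
    intro y hy
    apply image_eq_zero_of_notMem_tsupport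
    intro hc
    apply hy
    have := hr hc
    rw [Real.closedBall_eq_Icc] at this
    have h1 : -R ≤ -r := neg_le_neg (le_max_left r 0)
    have h2 : -r ≤ y := by simpa using this.1
    have h3 : y ≤ r := by simpa using this.2
    exact ⟨h1.trans h2, h3.trans (le_max_left r 0)⟩
  have hmom : ∀ k : ℕ, ∫ y, d y * y ^ k = 0 := by
    intro k
    have := myMoments hd hR hsupp h0 k 0
    simpa using this
  have hpoly : ∀ p : Polynomial ℝ, ∫ y, d y * p.eval y = 0 := by
    intro p
    have hrw : ∀ y : ℝ, d y * p.eval y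
        = ∑ i ∈ Finset.range (p.natDegree + 1), p.coeff i * (d y * y ^ i) := by
      intro y
      rw [Polynomial.eval_eq_sum_range, Finset.mul_sum]
      exact Finset.sum_congr rfl fun i _ => by ring
    simp_rw [hrw]
    rw [integral_finset_sum]
    · refine Finset.sum_eq_zero fun i _ => ?_
      rw [MeasureTheory.integral_const_mul, hmom i, mul_zero]
    · intro i _
      exact (myIntegrableMul hd hsupp ((continuous_pow i))).const_mul _
  apply ae_eq_zero_of_integral_contDiff_smul_eq_zero hd.locallyIntegrable
  intro φ hφ hφs
  have hφd : Integrable (fun y => φ y • d y) :=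
    hd.locallyIntegrable.integrable_smul_left_of_hasCompactSupport hφ.continuous hφs
  simp_rw [smul_eq_mul] at hφd ⊢
  have hkey : ∀ ε > (0:ℝ), |∫ y, φ y * d y| ≤ ε := by
    intro ε hε
    set N : ℝ := ∫ y, |d y| with hN
    have hN0 : 0 ≤ N := integral_nonneg fun y => abs_nonneg _
    set ε' : ℝ := ε / (N + 1) with hε'
    have hε'0 : 0 < ε' := div_pos hε (by linarith)
    obtain ⟨p, hp⟩ := exists_polynomial_near_of_continuousOn (-R) R φ
      hφ.continuous.continuousOn ε' hε'0
    have hpd : Integrable (fun y => d y * p.eval y) :=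
      myIntegrableMul hd hsupp (Polynomial.continuous p)
    have hsplit : (∫ y, φ y * d y)
        = (∫ y, (φ y - p.eval y) * d y) + ∫ y, d y * p.eval y := by
      rw [← integral_add (by
          have : (fun y => (φ y - p.eval y) * d y)
              = fun y => φ y * d y - d y * p.eval y := by funext y; ring
          rw [this]; exact hφd.sub hpd) hpd]
      congr 1 with y
      ring
    rw [hsplit, hpoly p, add_zero]
    have hb : ∀ y, ‖(φ y - p.eval y) * d y‖ ≤ ε' * |d y| := by
      intro y
      by_cases hy : y ∈ Set.Icc (-R) R
      · rw [norm_mul]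
        apply mul_le_mul_of_nonneg_right _ (abs_nonneg _)
        rw [Real.norm_eq_abs, abs_sub_comm]
        exact (hp y hy).le
      · simp only [hsupp y hy, mul_zero, norm_zero, abs_zero]
        simp [mul_zero]
    calc |∫ y, (φ y - p.eval y) * d y| ≤ ∫ y, ε' * |d y| := by
          have := norm_integral_le_of_norm_le ((hd.norm.const_mul ε'))
            (Filter.Eventually.of_forall hb)
          simpa [Real.norm_eq_abs] using this
      _ = ε' * N := by rw [MeasureTheory.integral_const_mul]
      _ ≤ ε' * (N + 1) := by nlinarith
      _ = ε := by rw [hε', div_mul_cancel₀ _ (by linarith : N + 1 ≠ 0)]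
  have : |∫ y, φ y * d y| ≤ 0 := by
    have := le_of_forall_pos_le_add (a := |∫ y, φ y * d y|) (b := 0)
      fun ε hε => by simpa using hkey ε hε
    exact this
  exact abs_nonpos_iff.mp this

lemma mySuppIcc {d : ℝ → ℝ} (hds : HasCompactSupport d) :
    ∃ R : ℝ, 0 ≤ R ∧ ∀ y ∉ Set.Icc (-R) R, d y = 0 := by
  obtain ⟨r, hr⟩ := hds.isBounded.subset_closedBall 0
  refine ⟨max r 0, le_max_right _ _, fun y hy => ?_⟩
  apply image_eq_zero_of_notMem_tsupport
  intro hc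
  apply hy
  have := hr hc
  rw [Real.closedBall_eq_Icc] at this
  have h1 : -(max r 0) ≤ -r := neg_le_neg (le_max_left r 0)
  have h2 : -r ≤ y := by simpa using this.1
  have h3 : y ≤ r := by simpa using this.2
  exact ⟨h1.trans h2, h3.trans (le_max_left r 0)⟩

-- character integrability
lemma myCharInt {m : ℕ} {a : (Fin m → ℝ) → ℝ} (ha : Integrable a) (ξ : Fin m → ℝ) :
    Integrable (fun x => (a x : ℂ) *
      Complex.exp (Complex.I * ∑ j, (ξ j : ℂ) * (x j : ℂ))) := by
  have hcont : Continuous fun x : Fin m → ℝ =>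
      Complex.exp (Complex.I * ∑ j, (ξ j : ℂ) * (x j : ℂ)) := by
    apply Complex.continuous_exp.comp
    exact continuous_const.mul (continuous_finset_sum _ fun j _ =>
      continuous_const.mul (Complex.continuous_ofReal.comp (continuous_apply j)))
  refine Integrable.mono' ha.norm
    ((Complex.continuous_ofReal.comp_aestronglyMeasurable ha.aestronglyMeasurable).mul hcont.aestronglyMeasurable)
    (Filter.Eventually.of_forall fun x => ?_)
  rw [norm_mul]
  have h1 : ‖Complex.exp (Complex.I * ∑ j, (ξ j : ℂ) * (x j : ℂ))‖ = 1 := by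
    rw [show Complex.I * ∑ j, (ξ j : ℂ) * (x j : ℂ)
        = ((∑ j, ξ j * x j : ℝ) : ℂ) * Complex.I by push_cast; ring]
    exact Complex.norm_exp_ofReal_mul_I _
  rw [h1, mul_one, Complex.norm_real, Real.norm_eq_abs]


/-- Lemma 2.2 of the paper (multiplicative separable form, comparison version). -/
theorem stmt_0 (n : ℕ) (hn : 2 ≤ n)
    (α α' : (Fin (n - 1) → ℝ) → ℝ) (β β' : ℝ → ℝ)
    (hαInt : Integrable α) (hα'Int : Integrable α')
    (hβInt : Integrable β) (hβ'Int : Integrable β')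
    (hαsupp : HasCompactSupport α) (hα'supp : HasCompactSupport α')
    (hβsupp : HasCompactSupport β) (hβ'supp : HasCompactSupport β')
    (hβeq : ∫ y : ℝ, β y = ∫ y : ℝ, β' y)
    (hβne : (∫ y : ℝ, β y) ≠ 0)
    (h : ∀ (ξ : Fin (n - 1) → ℝ) (ξn : ℝ),
      (∫ x : Fin (n - 1) → ℝ,
          (α x : ℂ) * Complex.exp (Complex.I * ∑ j, (ξ j : ℂ) * (x j : ℂ))) *
        (∫ y : ℝ, (β y : ℂ) * Complex.exp ((ξn : ℂ) * (y : ℂ))) =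
      (∫ x : Fin (n - 1) → ℝ,
          (α' x : ℂ) * Complex.exp (Complex.I * ∑ j, (ξ j : ℂ) * (x j : ℂ))) *
        (∫ y : ℝ, (β' y : ℂ) * Complex.exp ((ξn : ℂ) * (y : ℂ)))) :
    α =ᵐ[volume] α' ∧
      (fun p : (Fin (n - 1) → ℝ) × ℝ => α p.1 * β p.2)
        =ᵐ[volume] (fun p : (Fin (n - 1) → ℝ) × ℝ => α' p.1 * β' p.2) := by
  have hβC : (∫ y : ℝ, ((β y : ℂ))) = ((∫ y : ℝ, β y : ℝ) : ℂ) := integral_ofReal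
  have hβ'C : (∫ y : ℝ, ((β' y : ℂ))) = ((∫ y : ℝ, β' y : ℝ) : ℂ) := integral_ofReal
  have hcne : ((∫ y : ℝ, β y : ℝ) : ℂ) ≠ 0 := Complex.ofReal_ne_zero.mpr hβne
  -- Fourier transforms of α and α' agree
  have hq : ∀ ξ : Fin (n - 1) → ℝ,
      (∫ x : Fin (n - 1) → ℝ,
          (α x : ℂ) * Complex.exp (Complex.I * ∑ j, (ξ j : ℂ) * (x j : ℂ)))
      = ∫ x : Fin (n - 1) → ℝ,
          (α' x : ℂ) * Complex.exp (Complex.I * ∑ j, (ξ j : ℂ) * (x j : ℂ)) := by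
    intro ξ
    have h1 := h ξ 0
    simp only [Complex.ofReal_zero, zero_mul, Complex.exp_zero, mul_one] at h1
    rw [hβC, hβ'C, ← hβeq] at h1
    exact mul_right_cancel₀ hcne h1
  -- α = α' a.e.
  have hαa : α =ᵐ[volume] α' := by
    have h0 : ∀ ξ : Fin (n - 1) → ℝ, ∫ x : Fin (n - 1) → ℝ,
        (((fun x => α x - α' x) x : ℝ) : ℂ)
          * Complex.exp (Complex.I * ∑ j, (ξ j : ℂ) * (x j : ℂ)) = 0 := by
      intro ξ
      have hrw : (fun x : Fin (n - 1) → ℝ => (((fun x => α x - α' x) x : ℝ) : ℂ) *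
          Complex.exp (Complex.I * ∑ j, (ξ j : ℂ) * (x j : ℂ)))
          = fun x => (α x : ℂ) * Complex.exp (Complex.I * ∑ j, (ξ j : ℂ) * (x j : ℂ))
            - (α' x : ℂ) * Complex.exp (Complex.I * ∑ j, (ξ j : ℂ) * (x j : ℂ)) := by
        funext x; push_cast; ring
      rw [hrw, integral_sub (myCharInt hαInt ξ) (myCharInt hα'Int ξ), hq ξ, sub_self]
    have := pi_ae_zero (n - 1) (fun x => α x - α' x) (hαInt.sub hα'Int) h0
    filter_upwards [this] with x hx
    have hx' : α x - α' x = 0 := hx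
    linarith
  refine ⟨hαa, ?_⟩
  -- a.e. equality of products, given a.e. equality of factors
  have prodeq : ∀ (a a' : (Fin (n - 1) → ℝ) → ℝ) (b b' : ℝ → ℝ),
      a =ᵐ[volume] a' → b =ᵐ[volume] b' →
      (fun p : (Fin (n - 1) → ℝ) × ℝ => a p.1 * b p.2)
        =ᵐ[volume] fun p : (Fin (n - 1) → ℝ) × ℝ => a' p.1 * b' p.2 := by
    intro a a' b b' ha hb
    rw [Measure.volume_eq_prod]
    have h1 : (fun p : (Fin (n - 1) → ℝ) × ℝ => a p.1) =ᵐ[Measure.prod volume volume]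
        fun p => a' p.1 := ha.comp_tendsto Measure.quasiMeasurePreserving_fst.tendsto_ae
    have h2 : (fun p : (Fin (n - 1) → ℝ) × ℝ => b p.2) =ᵐ[Measure.prod volume volume]
        fun p => b' p.2 := hb.comp_tendsto Measure.quasiMeasurePreserving_snd.tendsto_ae
    exact h1.mul h2
  by_cases hα0 : α =ᵐ[volume] 0
  · -- both products vanish a.e.
    have hα'0 : α' =ᵐ[volume] (0 : (Fin (n - 1) → ℝ) → ℝ) := hαa.symm.trans hα0
    have e1 := prodeq α 0 β β hα0 (Filter.EventuallyEq.refl _ _)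
    have e2 := prodeq α' 0 β' β' hα'0 (Filter.EventuallyEq.refl _ _)
    simp only [Pi.zero_apply, zero_mul] at e1 e2
    exact e1.trans e2.symm
  · -- α is not a.e. zero: get a frequency where the Fourier transform does not vanish
    have hex : ∃ ξ₀ : Fin (n - 1) → ℝ, (∫ x : Fin (n - 1) → ℝ,
        (α x : ℂ) * Complex.exp (Complex.I * ∑ j, (ξ₀ j : ℂ) * (x j : ℂ))) ≠ 0 := by
      by_contra hcon
      push_neg at hcon
      exact hα0 (pi_ae_zero (n - 1) α hαInt hcon)
    obtain ⟨ξ₀, hξ₀⟩ := hex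
    -- Laplace transforms of β and β' agree
    have hL : ∀ t : ℝ, (∫ y : ℝ, β y * Real.exp (t * y))
        = ∫ y : ℝ, β' y * Real.exp (t * y) := by
      intro t
      have h1 := h ξ₀ t
      rw [← hq ξ₀] at h1
      have h2 := mul_left_cancel₀ hξ₀ h1
      have h3 : ∀ b : ℝ → ℝ, (∫ y : ℝ, (b y : ℂ) * Complex.exp ((t : ℂ) * (y : ℂ)))
          = ((∫ y : ℝ, b y * Real.exp (t * y) : ℝ) : ℂ) := by
        intro b
        rw [show (fun y : ℝ => (b y : ℂ) * Complex.exp ((t : ℂ) * (y : ℂ)))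
            = fun y : ℝ => ((b y * Real.exp (t * y) : ℝ) : ℂ) from
          funext fun y => by push_cast [Complex.ofReal_exp]; ring]
        exact integral_ofReal
      rw [h3 β, h3 β'] at h2
      exact_mod_cast h2
    -- β = β' a.e.
    have hβae : β =ᵐ[volume] β' := by
      have hds : HasCompactSupport (fun y => β y - β' y) := hβsupp.sub hβ'supp
      obtain ⟨R, hR0, hRs⟩ := mySuppIcc hβsupp
      obtain ⟨R', hR'0, hR's⟩ := mySuppIcc hβ'supp
      have h0 : ∀ t : ℝ, ∫ y : ℝ, (fun y => β y - β' y) y * Real.exp (t * y) = 0 := by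
        intro t
        have hrw : (fun y => (fun y => β y - β' y) y * Real.exp (t * y))
            = fun y => β y * Real.exp (t * y) - β' y * Real.exp (t * y) := by
          funext y; ring
        have hcont : Continuous fun y => Real.exp (t * y) :=
          Real.continuous_exp.comp (continuous_const.mul continuous_id)
        rw [hrw, integral_sub (myIntegrableMul hβInt hRs hcont)
          (myIntegrableMul hβ'Int hR's hcont), hL t, sub_self]
      have := myLaplaceZero (hβInt.sub hβ'Int) hds h0
      filter_upwards [this] with y hy
      have hy' : β y - β' y = 0 := hy
      linarith
    exact prodeq α α' β β' hαa hβae
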